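/- For all integers m ≥ 2 and j ≥ 1 and all p_1, p_1', p_2, …, p_m ∈ (0,1], one has | f_{m,j}(p_1, p_2, …, p_m) − f_{m,j}(p_1', p_2, …, p_m) | ≤ j | p_1 − p_1' |. -/

import Mathlib

open MeasureTheory

/-- The law of a geometric random variable with success probability `p`,
supported on the positive integers: `P(Y = k) = (1 - p)^(k-1) * p` for `k ≥ 1`. -/
noncomputable def geomMeasure (p : ℝ) : Measure ℕ :=
  Measure.count.withDensity
    (fun k => if 1 ≤ k then ENNReal.ofReal ((1 - p) ^ (k - 1) * p) else 0)

/-- `f_{m,j}(p_1, …, p_m) = P(Y_1 + ⋯ + Y_m > j)` where `Y_1, …, Y_m` are independent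
with `Y_i ~ Geom(p_i)`; realized via the product of the geometric laws. -/
noncomputable def geomF (m j : ℕ) (p : Fin m → ℝ) : ENNReal :=
  Measure.pi (fun i => geomMeasure (p i)) {x | j < ∑ i, x i}

lemma geom_apply_of {p : ℝ} (hp : p ∈ Set.Ioc (0:ℝ) 1) (t : ℕ) (s : Set ℕ)
    (hs : ∀ k, 1 ≤ k → (k ∈ s ↔ t < k)) :
    geomMeasure p s = ENNReal.ofReal ((1 - p) ^ t) := by
  have h1p : (0:ℝ) ≤ 1 - p := by linarith [hp.2]
  have hsm : MeasurableSet s := s.to_countable.measurableSet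
  rw [geomMeasure, withDensity_apply _ hsm, ← lintegral_indicator hsm, lintegral_count]
  set f : ℕ → ENNReal := fun k => if 1 ≤ k then ENNReal.ofReal ((1 - p) ^ (k - 1) * p) else 0
    with hf
  set F : ℕ → ENNReal := fun k => if t < k then ENNReal.ofReal ((1 - p) ^ (k - 1) * p) else 0
    with hF
  have hind : ∀ k, s.indicator f k = F k := by
    classical
    intro k
    rcases Nat.eq_zero_or_pos k with rfl | hk
    · simp [Set.indicator_apply, hf, hF]
    · have hk1 : 1 ≤ k := hk
      by_cases hmem : k ∈ s
      · have h2 : t < k := (hs k hk1).1 hmem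
        simp [Set.indicator_apply, hmem, hf, hF, hk1, h2]
      · have h2 : ¬ t < k := fun h => hmem ((hs k hk1).2 h)
        simp [Set.indicator_apply, hmem, hf, hF, h2]
  rw [tsum_congr hind]
  have hginj : Function.Injective (fun n : ℕ => n + (t+1)) := add_left_injective (t+1)
  have hsupp : Function.support F ⊆ Set.range (fun n : ℕ => n + (t+1)) := by
    intro k hk
    have : t < k := by
      by_contra h
      exact hk (by rw [hF]; simp only; rw [if_neg h])
    exact ⟨k - (t+1), show k - (t+1) + (t+1) = k by omega⟩
  rw [← hginj.tsum_eq hsupp]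
  have hFg : ∀ n : ℕ, F (n + (t+1)) =
      ENNReal.ofReal ((1 - p) ^ t * p) * (ENNReal.ofReal (1 - p)) ^ n := by
    intro n
    rw [hF]
    simp only
    rw [if_pos (by omega)]
    have : n + (t + 1) - 1 = t + n := by omega
    rw [this, ← ENNReal.ofReal_pow h1p, ← ENNReal.ofReal_mul (mul_nonneg (pow_nonneg h1p t) hp.1.le)]
    congr 1
    rw [pow_add]; ring
  rw [tsum_congr hFg, ENNReal.tsum_mul_left, ENNReal.tsum_geometric]
  have hop : (1 : ENNReal) - ENNReal.ofReal (1 - p) = ENNReal.ofReal p := by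
    rw [← ENNReal.ofReal_one, ← ENNReal.ofReal_sub _ h1p]
    norm_num
  rw [hop, ENNReal.ofReal_mul (pow_nonneg h1p t), mul_assoc,
    ENNReal.mul_inv_cancel (by simpa using hp.1) ENNReal.ofReal_ne_top, mul_one]

lemma geom_isProb {p : ℝ} (hp : p ∈ Set.Ioc (0:ℝ) 1) :
    IsProbabilityMeasure (geomMeasure p) := by
  constructor
  have := geom_apply_of hp 0 Set.univ (by intro k hk; simp only [Set.mem_univ, true_iff]; omega)
  simpa using this

lemma abs_pow_sub_pow_le' {x y : ℝ} (hx0 : 0 ≤ x) (hx1 : x ≤ 1) (hy0 : 0 ≤ y) (hy1 : y ≤ 1)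
    (t : ℕ) : |x ^ t - y ^ t| ≤ t * |x - y| := by
  induction t with
  | zero => simp
  | succ t ih =>
    have h1 : x ^ (t+1) - y ^ (t+1) = x * (x ^ t - y ^ t) + (x - y) * y ^ t := by ring
    have h2 : |x ^ (t+1) - y ^ (t+1)| ≤ |x| * |x ^ t - y ^ t| + |x - y| * |y ^ t| := by
      rw [h1]
      exact (abs_add_le _ _).trans (by rw [abs_mul, abs_mul])
    have hxa : |x| ≤ 1 := abs_le.2 ⟨by linarith, hx1⟩
    have hya : |y ^ t| ≤ 1 := by
      rw [abs_of_nonneg (pow_nonneg hy0 t)]; exact pow_le_one₀ hy0 hy1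
    have h3 : |x| * |x ^ t - y ^ t| ≤ |x ^ t - y ^ t| :=
      mul_le_of_le_one_left (abs_nonneg _) hxa
    have h4 : |x - y| * |y ^ t| ≤ |x - y| :=
      mul_le_of_le_one_right (abs_nonneg _) hya
    push_cast
    linarith

lemma geomF_succ_eq (n j : ℕ) (p : Fin (n+1) → ℝ) (hp : ∀ i, p i ∈ Set.Ioc (0:ℝ) 1) :
    geomF (n+1) j p = ∫⁻ y : Fin n → ℕ, ENNReal.ofReal ((1 - p 0) ^ (j - ∑ i, y i))
      ∂(Measure.pi fun i => geomMeasure (p i.succ)) := by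
  haveI : ∀ i, SigmaFinite (geomMeasure (p i)) := fun i => haveI := geom_isProb (hp i); inferInstance
  haveI : ∀ i : Fin n, SigmaFinite (geomMeasure (p i.succ)) :=
    fun i => haveI := geom_isProb (hp i.succ); inferInstance
  have hmp := measurePreserving_piFinSuccAbove (fun i : Fin (n+1) => geomMeasure (p i)) 0
  set T : Set (ℕ × (Fin n → ℕ)) := {z | j < z.1 + ∑ i, z.2 i} with hT
  have hTm : MeasurableSet T := by
    have : Measurable (fun z : ℕ × (Fin n → ℕ) => z.1 + ∑ i, z.2 i) :=
      measurable_fst.add (Finset.measurable_sum _ fun i _ =>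
        (measurable_pi_apply i).comp measurable_snd)
    exact this measurableSet_Ioi
  have hset : {x : Fin (n+1) → ℕ | j < ∑ i, x i}
      = (MeasurableEquiv.piFinSuccAbove (fun _ : Fin (n+1) => ℕ) 0) ⁻¹' T := by
    ext x
    simp [T, MeasurableEquiv.piFinSuccAbove_apply, Fin.sum_univ_succ, Fin.removeNth,
      Fin.succAbove, Fin.tail]
  rw [geomF, hset, hmp.measure_preimage hTm.nullMeasurableSet,
    Measure.prod_apply_symm hTm]
  simp only [Fin.succAbove_zero]
  refine lintegral_congr fun y => ?_
  have : (fun x : ℕ => (x, y)) ⁻¹' T = {x : ℕ | j < x + ∑ i, y i} := rfl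
  rw [this]
  exact geom_apply_of (hp 0) (j - ∑ i, y i) _ (fun k hk => by
    simp only [Set.mem_setOf_eq]; omega)

/-- For all integers `m ≥ 2`, `j ≥ 1` and all
`p_1, p_1', p_2, …, p_m ∈ (0,1]`,
`|f_{m,j}(p_1, p_2, …, p_m) − f_{m,j}(p_1', p_2, …, p_m)| ≤ j |p_1 − p_1'|`. -/
theorem geomF_lipschitz_first_coordinate
    (m j : ℕ) (hm : 2 ≤ m) (hj : 1 ≤ j)
    (p : Fin m → ℝ) (hp : ∀ i, p i ∈ Set.Ioc (0 : ℝ) 1)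
    (p₁' : ℝ) (hp₁' : p₁' ∈ Set.Ioc (0 : ℝ) 1) :
    |(geomF m j p).toReal
        - (geomF m j (Function.update p ⟨0, by omega⟩ p₁')).toReal|
      ≤ j * |p ⟨0, by omega⟩ - p₁'| := by
  obtain ⟨n, rfl⟩ : ∃ n, m = n + 1 := ⟨m - 1, by omega⟩
  have h0 : (⟨0, by omega⟩ : Fin (n+1)) = 0 := rfl
  rw [h0]
  set a := p 0 with ha
  set q := Function.update p 0 p₁' with hqdef
  have hq : ∀ i, q i ∈ Set.Ioc (0:ℝ) 1 := by
    intro i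
    rcases eq_or_ne i 0 with rfl | h
    · simpa [hqdef] using hp₁'
    · simpa [hqdef, Function.update_of_ne h] using hp i
  haveI : ∀ i : Fin n, IsProbabilityMeasure (geomMeasure (p i.succ)) :=
    fun i => geom_isProb (hp i.succ)
  set ν := Measure.pi fun i : Fin n => geomMeasure (p i.succ) with hν
  haveI hνprob : IsProbabilityMeasure ν := by rw [hν]; infer_instance
  have hA := geomF_succ_eq n j p hp
  have hB : geomF (n+1) j q
      = ∫⁻ y : Fin n → ℕ, ENNReal.ofReal ((1 - p₁') ^ (j - ∑ i, y i)) ∂ν := by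
    have h := geomF_succ_eq n j q hq
    have hmeas : (fun i : Fin n => geomMeasure (q i.succ))
        = fun i : Fin n => geomMeasure (p i.succ) := by
      funext i; rw [hqdef, Function.update_of_ne (Fin.succ_ne_zero i)]
    have hq0 : q 0 = p₁' := by rw [hqdef]; exact Function.update_self _ _ _
    rw [h, hmeas, hq0]
  set C := ENNReal.ofReal ((j:ℝ) * |a - p₁'|) with hC
  have h1a : 0 ≤ 1 - a := by linarith [(hp 0).2]
  have h1a' : 1 - a ≤ 1 := by linarith [(hp 0).1]
  have h1b : 0 ≤ 1 - p₁' := by linarith [hp₁'.2]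
  have h1b' : 1 - p₁' ≤ 1 := by linarith [hp₁'.1]
  have key : ∀ (u v : ℝ), 0 ≤ u → u ≤ 1 → 0 ≤ v → v ≤ 1 → ∀ t : ℕ, t ≤ j →
      u ^ t ≤ v ^ t + (j:ℝ) * |(1 - u) - (1 - v)| := by
    intro u v hu0 hu1 hv0 hv1 t ht
    have h1 := abs_pow_sub_pow_le' hu0 hu1 hv0 hv1 t
    have h2 : (t:ℝ) * |u - v| ≤ (j:ℝ) * |u - v| :=
      mul_le_mul_of_nonneg_right (by exact_mod_cast ht) (abs_nonneg _)
    have h3 : |(1 - u) - (1 - v)| = |u - v| := by rw [show (1-u)-(1-v) = -(u-v) by ring, abs_neg]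
    rw [h3]
    have := abs_le.1 h1
    linarith [this.2]
  have pointwise1 : ∀ y : Fin n → ℕ,
      ENNReal.ofReal ((1 - a) ^ (j - ∑ i, y i))
        ≤ ENNReal.ofReal ((1 - p₁') ^ (j - ∑ i, y i)) + C := by
    intro y
    have ht : j - ∑ i, y i ≤ j := Nat.sub_le _ _
    have := key (1-a) (1-p₁') h1a h1a' h1b h1b' _ ht
    have habs : |(1 - (1-a)) - (1 - (1-p₁'))| = |a - p₁'| := by ring_nf
    rw [habs] at this
    calc ENNReal.ofReal ((1 - a) ^ (j - ∑ i, y i))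
        ≤ ENNReal.ofReal ((1 - p₁') ^ (j - ∑ i, y i) + (j:ℝ) * |a - p₁'|) :=
          ENNReal.ofReal_le_ofReal this
      _ = _ := ENNReal.ofReal_add (pow_nonneg h1b _) (by positivity)
  have pointwise2 : ∀ y : Fin n → ℕ,
      ENNReal.ofReal ((1 - p₁') ^ (j - ∑ i, y i))
        ≤ ENNReal.ofReal ((1 - a) ^ (j - ∑ i, y i)) + C := by
    intro y
    have ht : j - ∑ i, y i ≤ j := Nat.sub_le _ _
    have := key (1-p₁') (1-a) h1b h1b' h1a h1a' _ ht
    have habs : |(1 - (1-p₁')) - (1 - (1-a))| = |a - p₁'| := by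
      rw [show (1 - (1-p₁')) - (1 - (1-a)) = -(a - p₁') by ring, abs_neg]
    rw [habs] at this
    calc ENNReal.ofReal ((1 - p₁') ^ (j - ∑ i, y i))
        ≤ ENNReal.ofReal ((1 - a) ^ (j - ∑ i, y i) + (j:ℝ) * |a - p₁'|) :=
          ENNReal.ofReal_le_ofReal this
      _ = _ := ENNReal.ofReal_add (pow_nonneg h1a _) (by positivity)
  have hint : ∀ (c : ℝ) (f : (Fin n → ℕ) → ENNReal),
      (∫⁻ y, (f y + ENNReal.ofReal c) ∂ν) = (∫⁻ y, f y ∂ν) + ENNReal.ofReal c := by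
    intro c f
    rw [lintegral_add_right _ measurable_const, lintegral_const, measure_univ, mul_one]
  have hle1 : geomF (n+1) j p ≤ geomF (n+1) j q + C := by
    rw [hA, hB, hC, ← hint]
    exact lintegral_mono pointwise1
  have hle2 : geomF (n+1) j q ≤ geomF (n+1) j p + C := by
    rw [hA, hB, hC, ← hint]
    exact lintegral_mono pointwise2
  haveI : ∀ i : Fin (n+1), IsProbabilityMeasure (geomMeasure (p i)) :=
    fun i => geom_isProb (hp i)
  haveI : ∀ i : Fin (n+1), IsProbabilityMeasure (geomMeasure (q i)) :=
    fun i => geom_isProb (hq i)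
  have hAne : geomF (n+1) j p ≠ ⊤ := by
    simp only [geomF]; exact measure_ne_top _ _
  have hBne : geomF (n+1) j q ≠ ⊤ := by
    simp only [geomF]; exact measure_ne_top _ _
  have hCne : C ≠ ⊤ := ENNReal.ofReal_ne_top
  have hCt : C.toReal = (j:ℝ) * |a - p₁'| := ENNReal.toReal_ofReal (by positivity)
  rw [abs_sub_le_iff]
  constructor
  · have h := ENNReal.toReal_mono (by finiteness) hle1
    rw [ENNReal.toReal_add hBne hCne, hCt] at h
    linarith
  · have h := ENNReal.toReal_mono (by finiteness) hle2
    rw [ENNReal.toReal_add hAne hCne, hCt] at h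
    linarith
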